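/- Any Euler field E on the 2-dimensional F-manifold germ N₂, given by (ℂ²,0) with coordinates (t₁,t₂), e = ∂₁ and ∂₂∘∂₂ = 0, has the form E = (t₁ + c₁)∂₁ + g(t₂)∂₂ for some c₁ ∈ ℂ and some g(t₂) ∈ ℂ{t₂}. -/

import Mathlib

open Matrix

noncomputable section

/-- The multiplication of the F-manifold `N₂`: `∂₁` is the unit and `∂₂∘∂₂ = 0`,
extended function-bilinearly to vector fields on `ℂ²`. -/
def vmulN2 (X Y : (Fin 2 → ℂ) → (Fin 2 → ℂ)) : (Fin 2 → ℂ) → Fin 2 → ℂ :=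
  fun t => ![X t 0 * Y t 0, X t 0 * Y t 1 + X t 1 * Y t 0]

/-- The Lie bracket of vector fields on `ℂ²`. -/
def vbracket (X Y : (Fin 2 → ℂ) → (Fin 2 → ℂ)) : (Fin 2 → ℂ) → Fin 2 → ℂ :=
  fun t i => ∑ j : Fin 2,
    (X t j * fderiv ℂ (fun s => Y s i) t (Pi.single j 1)
      - Y t j * fderiv ℂ (fun s => X s i) t (Pi.single j 1))

/-- Derivative of a function along an affine line. -/
lemma lineDeriv_aux (F : (Fin 2 → ℂ) → ℂ) (c v : Fin 2 → ℂ) (s : ℂ)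
    (hF : DifferentiableAt ℂ F (c + s • v)) :
    HasDerivAt (fun z : ℂ => F (c + z • v)) (fderiv ℂ F (c + s • v) v) s := by
  have hline : HasDerivAt (fun z : ℂ => c + z • v) v s := by
    simpa using ((hasDerivAt_id s).smul_const v).const_add c
  exact hF.hasFDerivAt.comp_hasDerivAt s hline

/-- A function on a complex ball with zero derivative is constant. -/
lemma const_on_ball_aux {r : ℝ} (hr : 0 < r) (f : ℂ → ℂ)
    (h : ∀ z ∈ Metric.ball (0 : ℂ) r, HasDerivAt f 0 z) {a : ℂ}
    (ha : a ∈ Metric.ball (0 : ℂ) r) : f a = f 0 := by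
  refine (convex_ball (0 : ℂ) r).is_const_of_fderivWithin_eq_zero
    (fun z hz => ((h z hz).differentiableAt).differentiableWithinAt)
    (fun z hz => ?_) ha (Metric.mem_ball_self hr)
  rw [fderivWithin_of_isOpen Metric.isOpen_ball hz, ((h z hz).hasFDerivAt).fderiv]
  ext
  simp

lemma single_eq_line_aux (j : Fin 2) (w : ℂ) :
    (0 : Fin 2 → ℂ) + w • (Pi.single j 1 : Fin 2 → ℂ) = (Pi.single j w : Fin 2 → ℂ) := by
  funext i
  by_cases h : i = j <;> simp [Pi.single_apply, h]

/-- Any Euler field on the germ `N₂`, i.e., any holomorphic vector field `E` on a connected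
open neighbourhood `U` of `0` in `ℂ²` with `Lie_E(∘) = ∘`, has the form
`E = (t₁ + c₁)∂₁ + g(t₂)∂₂` for some `c₁ ∈ ℂ` and some `g ∈ ℂ{t₂}`. -/
theorem statement11 (U : Set (Fin 2 → ℂ)) (hU : IsOpen U) (hUc : IsPreconnected U)
    (h0 : (0 : Fin 2 → ℂ) ∈ U)
    (Efld : (Fin 2 → ℂ) → (Fin 2 → ℂ))
    (hE : ∀ i, DifferentiableOn ℂ (fun t => Efld t i) U)
    (hEuler : ∀ X Y : (Fin 2 → ℂ) → (Fin 2 → ℂ),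
        (∀ i, DifferentiableOn ℂ (fun t => X t i) U) →
        (∀ i, DifferentiableOn ℂ (fun t => Y t i) U) →
        ∀ t ∈ U,
          vbracket Efld (vmulN2 X Y) t - vmulN2 (vbracket Efld X) Y t
            - vmulN2 X (vbracket Efld Y) t = vmulN2 X Y t) :
    ∃ c₁ : ℂ, ∃ g : ℂ → ℂ, AnalyticAt ℂ g 0 ∧
      ∀ᶠ t in nhds (0 : Fin 2 → ℂ), Efld t 0 = t 0 + c₁ ∧ Efld t 1 = g (t 1) := by
  have hDA : ∀ i, ∀ t ∈ U, DifferentiableAt ℂ (fun s => Efld s i) t :=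
    fun i t ht => (hE i t ht).differentiableAt (hU.mem_nhds ht)
  have hconst : ∀ v : Fin 2 → ℂ,
      ∀ i, DifferentiableOn ℂ (fun t : Fin 2 → ℂ => (fun _ : Fin 2 → ℂ => v) t i) U :=
    fun v i => differentiableOn_const _
  have hD00 : ∀ t ∈ U, fderiv ℂ (fun s => Efld s 0) t (Pi.single 0 1) = 1 := by
    intro t ht
    have key := hEuler (fun _ => ![1, 0]) (fun _ => ![1, 0]) (hconst _) (hconst _) t ht
    have hm : vmulN2 (fun _ : Fin 2 → ℂ => ![1, 0]) (fun _ => ![1, 0])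
        = fun _ => ![(1 : ℂ), 0] := by funext s; simp [vmulN2]
    rw [hm] at key
    have k0 := congrFun key 0
    simpa [vmulN2, vbracket, Fin.sum_univ_two, Matrix.vecHead, Matrix.vecTail] using k0
  have hD10 : ∀ t ∈ U, fderiv ℂ (fun s => Efld s 1) t (Pi.single 0 1) = 0 := by
    intro t ht
    have key := hEuler (fun _ => ![1, 0]) (fun _ => ![1, 0]) (hconst _) (hconst _) t ht
    have hm : vmulN2 (fun _ : Fin 2 → ℂ => ![1, 0]) (fun _ => ![1, 0])
        = fun _ => ![(1 : ℂ), 0] := by funext s; simp [vmulN2]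
    rw [hm] at key
    have k1 := congrFun key 1
    simpa [vmulN2, vbracket, Fin.sum_univ_two, Matrix.vecHead, Matrix.vecTail] using k1
  have hD01 : ∀ t ∈ U, fderiv ℂ (fun s => Efld s 0) t (Pi.single 1 1) = 0 := by
    intro t ht
    have key := hEuler (fun _ => ![0, 1]) (fun _ => ![0, 1]) (hconst _) (hconst _) t ht
    have hm : vmulN2 (fun _ : Fin 2 → ℂ => ![0, 1]) (fun _ => ![0, 1])
        = fun _ => ![(0 : ℂ), 0] := by funext s; simp [vmulN2]
    rw [hm] at key
    have k1 := congrFun key 1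
    simpa [vmulN2, vbracket, Fin.sum_univ_two, Matrix.vecHead, Matrix.vecTail] using k1
  obtain ⟨r, hr, hball⟩ := Metric.isOpen_iff.mp hU 0 h0
  have hmem : ∀ p : Fin 2 → ℂ, ‖p 0‖ < r → ‖p 1‖ < r → p ∈ U := by
    intro p h0' h1'
    apply hball
    rw [Metric.mem_ball, dist_zero_right, pi_norm_lt_iff hr]
    intro i
    fin_cases i <;> assumption
  set g : ℂ → ℂ := fun z => Efld (Pi.single 1 z : Fin 2 → ℂ) 1 with hg
  refine ⟨Efld 0 0, g, ?_, ?_⟩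
  · -- analyticity of g at 0
    have hdiff : DifferentiableOn ℂ g (Metric.ball (0 : ℂ) r) := by
      intro z hz
      rw [Metric.mem_ball, dist_zero_right] at hz
      have hpt : (Pi.single 1 z : Fin 2 → ℂ) ∈ U := by
        refine hmem _ ?_ ?_
        · simpa [Pi.single_apply] using hr
        · simpa [Pi.single_apply] using hz
      have hd := lineDeriv_aux (fun s => Efld s 1) 0 (Pi.single 1 1 : Fin 2 → ℂ) z
        (by rw [single_eq_line_aux]; exact hDA 1 _ hpt)
      have hda : DifferentiableAt ℂ
          (fun w : ℂ => Efld ((0 : Fin 2 → ℂ) + w • (Pi.single 1 1 : Fin 2 → ℂ)) 1) z :=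
        hd.differentiableAt
      have heq : (fun w : ℂ => Efld ((0 : Fin 2 → ℂ) + w • (Pi.single 1 1 : Fin 2 → ℂ)) 1)
          = g := by
        funext w; rw [single_eq_line_aux]
      rw [heq] at hda
      exact hda.differentiableWithinAt
    exact hdiff.analyticAt (Metric.ball_mem_nhds 0 hr)
  · refine Filter.eventually_of_mem (Metric.ball_mem_nhds 0 hr) ?_
    intro t ht
    rw [Metric.mem_ball, dist_zero_right] at ht
    have ht0 : ‖t 0‖ < r := lt_of_le_of_lt (norm_le_pi_norm t 0) ht
    have ht1 : ‖t 1‖ < r := lt_of_le_of_lt (norm_le_pi_norm t 1) ht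
    constructor
    · -- first component
      have step1 : Efld t 0 = Efld (Pi.single 0 (t 0) : Fin 2 → ℂ) 0 := by
        have hc : ∀ z : ℂ, ‖z‖ < r →
            ((Pi.single 0 (t 0) : Fin 2 → ℂ) + z • (Pi.single 1 1 : Fin 2 → ℂ)) ∈ U := by
          intro z hz
          refine hmem _ ?_ ?_
          · simpa [Pi.single_apply] using ht0
          · simpa [Pi.single_apply] using hz
        have key := const_on_ball_aux hr
          (fun z => Efld ((Pi.single 0 (t 0) : Fin 2 → ℂ) + z • (Pi.single 1 1 : Fin 2 → ℂ)) 0)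
          (fun z hz => by
            rw [Metric.mem_ball, dist_zero_right] at hz
            have hd := lineDeriv_aux (fun s => Efld s 0) (Pi.single 0 (t 0) : Fin 2 → ℂ)
              (Pi.single 1 1 : Fin 2 → ℂ) z (hDA 0 _ (hc z hz))
            rwa [hD01 _ (hc z hz)] at hd)
          (a := t 1) (by rwa [Metric.mem_ball, dist_zero_right])
        have e1 : ((Pi.single 0 (t 0) : Fin 2 → ℂ) + t 1 • (Pi.single 1 1 : Fin 2 → ℂ)) = t := by
          funext i; fin_cases i <;> simp [Pi.single_apply]
        have e2 : ((Pi.single 0 (t 0) : Fin 2 → ℂ) + (0 : ℂ) • (Pi.single 1 1 : Fin 2 → ℂ))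
            = (Pi.single 0 (t 0) : Fin 2 → ℂ) := by
          funext i; fin_cases i <;> simp [Pi.single_apply]
        simpa only [e1, e2] using key
      have step2 : Efld (Pi.single 0 (t 0) : Fin 2 → ℂ) 0 = t 0 + Efld 0 0 := by
        have hc : ∀ z : ℂ, ‖z‖ < r →
            ((0 : Fin 2 → ℂ) + z • (Pi.single 0 1 : Fin 2 → ℂ)) ∈ U := by
          intro z hz
          refine hmem _ ?_ ?_
          · simpa [Pi.single_apply] using hz
          · simpa [Pi.single_apply] using hr
        have key := const_on_ball_aux hr
          (fun z => Efld ((0 : Fin 2 → ℂ) + z • (Pi.single 0 1 : Fin 2 → ℂ)) 0 - z)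
          (fun z hz => by
            rw [Metric.mem_ball, dist_zero_right] at hz
            have hd := lineDeriv_aux (fun s => Efld s 0) 0 (Pi.single 0 1 : Fin 2 → ℂ) z
              (hDA 0 _ (hc z hz))
            rw [hD00 _ (hc z hz)] at hd
            have h2 := hd.sub (hasDerivAt_id' z)
            rw [sub_self] at h2
            exact h2)
          (a := t 0) (by rwa [Metric.mem_ball, dist_zero_right])
        simp only [single_eq_line_aux, Pi.single_zero, sub_zero] at key
        linear_combination key
      rw [step1, step2]
    · -- second component
      have hc : ∀ z : ℂ, ‖z‖ < r →
          ((Pi.single 1 (t 1) : Fin 2 → ℂ) + z • (Pi.single 0 1 : Fin 2 → ℂ)) ∈ U := by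
        intro z hz
        refine hmem _ ?_ ?_
        · simpa [Pi.single_apply] using hz
        · simpa [Pi.single_apply] using ht1
      have key := const_on_ball_aux hr
        (fun z => Efld ((Pi.single 1 (t 1) : Fin 2 → ℂ) + z • (Pi.single 0 1 : Fin 2 → ℂ)) 1)
        (fun z hz => by
          rw [Metric.mem_ball, dist_zero_right] at hz
          have hd := lineDeriv_aux (fun s => Efld s 1) (Pi.single 1 (t 1) : Fin 2 → ℂ)
            (Pi.single 0 1 : Fin 2 → ℂ) z (hDA 1 _ (hc z hz))
          rwa [hD10 _ (hc z hz)] at hd)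
        (a := t 0) (by rwa [Metric.mem_ball, dist_zero_right])
      have e1 : ((Pi.single 1 (t 1) : Fin 2 → ℂ) + t 0 • (Pi.single 0 1 : Fin 2 → ℂ)) = t := by
        funext i; fin_cases i <;> simp [Pi.single_apply]
      have e2 : ((Pi.single 1 (t 1) : Fin 2 → ℂ) + (0 : ℂ) • (Pi.single 0 1 : Fin 2 → ℂ))
          = (Pi.single 1 (t 1) : Fin 2 → ℂ) := by
        funext i; fin_cases i <;> simp [Pi.single_apply]
      simpa only [e1, e2, hg] using key
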